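/- Let γ ∈ (0,2) and let L be slowly varying at infinity. Suppose there exist positive constants C₁ and C₂ such that G(x) ≤ C₁·x^{2−γ}·L(1/x) for all x ∈ (0,π] and V(n) ≥ C₂·n^γ·L(n) for every integer n ≥ 1. Then there exist C₃ > 0 and x₀ > 0 such that G(x) ≥ C₃·x^{2−γ}·L(1/x) for all x ∈ (0, x₀]. -/

import Mathlib

open MeasureTheory Filter Set Topology
open scoped ENNReal

/-- Fejér-type kernel: `I_n(y) = sin²(ny/2)/sin²(y/2)` for `y ≠ 0`, `I_n(0) = n²`. -/
noncomputable def fejerKernel (n : ℕ) (y : ℝ) : ℝ :=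
  if y = 0 then (n : ℝ) ^ 2 else Real.sin (n * y / 2) ^ 2 / Real.sin (y / 2) ^ 2

/-- Variance functional `V(n) = ∫_{[0,π]} I_n(y) dμ(y)`. -/
noncomputable def varV (μ : Measure ℝ) (n : ℕ) : ℝ :=
  ∫ y in Icc 0 Real.pi, fejerKernel n y ∂μ

/-- `G(x) = μ([0,x])` for a measure `μ` on `[0,π]`. -/
noncomputable def specG (μ : Measure ℝ) (x : ℝ) : ℝ :=
  (μ (Icc 0 x)).toReal

/-- A function `L : (0,∞) → (0,∞)` is slowly varying at infinity if
`L(λx)/L(x) → 1` as `x → ∞` for every `λ > 0`. -/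
def SlowlyVarying (L : ℝ → ℝ) : Prop :=
  ∀ lam : ℝ, 0 < lam → Tendsto (fun x => L (lam * x) / L x) atTop (𝓝 1)

/-! ### Auxiliary lemmas -/

section Aux

lemma abs_sin_nat_mul_le (n : ℕ) (t : ℝ) : |Real.sin (n * t)| ≤ n * |Real.sin t| := by
  induction n with
  | zero => simp
  | succ k ih =>
    have he : ((k:ℝ)+1) * t = k * t + t := by ring
    rw [Nat.cast_succ, he, Real.sin_add]
    have h1 : |Real.sin (k*t) * Real.cos t + Real.cos (k*t) * Real.sin t|
        ≤ |Real.sin (k*t)| * |Real.cos t| + |Real.cos (k*t)| * |Real.sin t| := by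
      rw [← abs_mul, ← abs_mul]; exact abs_add_le _ _
    have hc1 := Real.abs_cos_le_one t
    have hc2 := Real.abs_cos_le_one ((k:ℝ)*t)
    have hs1 := abs_nonneg (Real.sin t)
    have hs2 := abs_nonneg (Real.sin ((k:ℝ)*t))
    nlinarith [ih]

lemma fejer_nonneg (n : ℕ) (y : ℝ) : 0 ≤ fejerKernel n y := by
  unfold fejerKernel; split <;> positivity

lemma fejer_le_sq (n : ℕ) (y : ℝ) : fejerKernel n y ≤ (n:ℝ)^2 := by
  unfold fejerKernel
  split
  · exact le_rfl
  · rcases eq_or_ne (Real.sin (y/2)) 0 with h | h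
    · simp [h]
    · rw [div_le_iff₀ (by positivity)]
      have h2 : Real.sin (n * y / 2) ^ 2 ≤ ((n:ℝ) * |Real.sin (y/2)|)^2 := by
        rw [← sq_abs]
        apply pow_le_pow_left₀ (abs_nonneg _)
        rw [show n * y / 2 = n * (y/2) by ring]
        exact abs_sin_nat_mul_le n (y/2)
      calc Real.sin (n * y / 2) ^ 2 ≤ ((n:ℝ) * |Real.sin (y/2)|)^2 := h2
        _ = (n:ℝ)^2 * Real.sin (y/2)^2 := by rw [mul_pow, sq_abs]

lemma fejer_le_inv_sq (n : ℕ) {y : ℝ} (hy : 0 < y) (hy' : y ≤ Real.pi) :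
    fejerKernel n y ≤ Real.pi^2 / y^2 := by
  have hsin : y / Real.pi ≤ Real.sin (y/2) := by
    have h := Real.mul_le_sin (x := y/2) (by positivity) (by linarith)
    have heq : 2 / Real.pi * (y/2) = y / Real.pi := by
      field_simp
    linarith [heq ▸ h]
  have hyp : 0 < y / Real.pi := by positivity
  unfold fejerKernel
  rw [if_neg hy.ne']
  have h2 : (y/Real.pi)^2 ≤ Real.sin (y/2)^2 := pow_le_pow_left₀ (le_of_lt hyp) hsin 2
  calc Real.sin (n * y / 2)^2 / Real.sin (y/2)^2
      ≤ 1 / (y/Real.pi)^2 :=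
        div_le_div₀ (by norm_num) (Real.sin_sq_le_one _) (by positivity) h2
    _ = Real.pi^2 / y^2 := by
        rw [div_pow, one_div, inv_div]

lemma fejer_measurable (n : ℕ) : Measurable (fejerKernel n) := by
  unfold fejerKernel
  apply Measurable.ite (measurableSet_eq) measurable_const
  exact ((Real.continuous_sin.comp (by continuity)).pow 2).measurable.div
    ((Real.continuous_sin.comp (by continuity)).pow 2).measurable

lemma fejer_integrable (μ : Measure ℝ) [IsFiniteMeasure μ] (n : ℕ) :
    Integrable (fejerKernel n) μ := by
  apply Integrable.mono' (integrable_const ((n:ℝ)^2))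
    (fejer_measurable n).aestronglyMeasurable
  filter_upwards with y
  rw [Real.norm_eq_abs, abs_of_nonneg (fejer_nonneg n y)]
  exact fejer_le_sq n y

lemma setInt_fejer_le (μ : Measure ℝ) [IsFiniteMeasure μ] (n : ℕ) {s : Set ℝ}
    (hs : MeasurableSet s) {c : ℝ} (hc : ∀ y ∈ s, fejerKernel n y ≤ c) :
    ∫ y in s, fejerKernel n y ∂μ ≤ c * (μ s).toReal := by
  have h1 : ∫ y in s, fejerKernel n y ∂μ ≤ ∫ _ in s, c ∂μ :=
    setIntegral_mono_on ((fejer_integrable μ n).integrableOn)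
      (integrableOn_const (measure_ne_top μ s)) hs hc
  rw [setIntegral_const, smul_eq_mul, mul_comm (μ.real s) c] at h1; exact h1

lemma geom_le_aux {r : ℝ} (h0 : 0 ≤ r) (h1 : r < 1) (K : ℕ) :
    ∑ k ∈ Finset.range K, r^k ≤ 1/(1-r) := by
  have hne : r ≠ 1 := ne_of_lt h1
  rw [geom_sum_eq hne K]
  have h2 : (r^K - 1)/(r - 1) = (1 - r^K)/(1 - r) := by
    rw [← neg_div_neg_eq]; ring_nf
  rw [h2]
  gcongr
  · linarith [pow_nonneg h0 K]

lemma exists_dyadic {a b : ℝ} (ha : 0 < a) (hab : a ≤ b) :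
    ∃ K : ℕ, b ≤ 2^K * a ∧ (2:ℝ)^K * a ≤ 2*b := by
  classical
  have hex : ∃ K : ℕ, b ≤ 2^K * a := by
    obtain ⟨K, hK⟩ := pow_unbounded_of_one_lt (b/a) one_lt_two
    exact ⟨K, by rw [← div_le_iff₀ ha] ; exact hK.le⟩
  refine ⟨Nat.find hex, Nat.find_spec hex, ?_⟩
  rcases Nat.eq_zero_or_pos (Nat.find hex) with h0 | hpos
  · rw [h0]; norm_num; linarith
  · obtain ⟨m, hm⟩ : ∃ m, Nat.find hex = m + 1 :=
      ⟨Nat.find hex - 1, (Nat.succ_pred_eq_of_pos hpos).symm⟩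
    have h2 : ¬ (b ≤ 2^m * a) := Nat.find_min hex (by omega)
    push_neg at h2
    rw [hm]
    calc (2:ℝ)^(m+1) * a = 2*((2:ℝ)^m * a) := by rw [pow_succ]; ring
      _ ≤ 2*b := by linarith

lemma dyadic_bound (μ : Measure ℝ) [IsFiniteMeasure μ] (n : ℕ) {a : ℝ} (ha : 0 < a) :
    ∀ K : ℕ, (2:ℝ)^K * a ≤ Real.pi →
      ∫ y in Ioc a ((2:ℝ)^K * a), fejerKernel n y ∂μ ≤
        ∑ k ∈ Finset.range K, Real.pi^2 / ((2:ℝ)^k * a)^2 * specG μ ((2:ℝ)^(k+1) * a) := by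
  intro K
  induction K with
  | zero => intro _; simp
  | succ K ih =>
    intro hK
    have hmono : (2:ℝ)^K * a ≤ (2:ℝ)^(K+1) * a := by
      have : (2:ℝ)^K ≤ 2^(K+1) := by
        apply pow_le_pow_right₀ one_le_two (Nat.le_succ K)
      nlinarith
    have h2K : (2:ℝ)^K * a ≤ Real.pi := le_trans hmono hK
    have haK : a ≤ (2:ℝ)^K * a := by
      nlinarith [one_le_pow₀ (one_le_two (α := ℝ)) (n := K)]
    have hsplit : Ioc a ((2:ℝ)^(K+1) * a)
        = Ioc a ((2:ℝ)^K * a) ∪ Ioc ((2:ℝ)^K * a) ((2:ℝ)^(K+1) * a) :=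
      (Ioc_union_Ioc_eq_Ioc haK hmono).symm
    rw [hsplit, setIntegral_union (Ioc_disjoint_Ioc_of_le le_rfl) measurableSet_Ioc
      ((fejer_integrable μ n).integrableOn) ((fejer_integrable μ n).integrableOn),
      Finset.sum_range_succ]
    apply add_le_add (ih h2K)
    have hKa0 : 0 < (2:ℝ)^K * a := by positivity
    have hstep : ∫ y in Ioc ((2:ℝ)^K * a) ((2:ℝ)^(K+1) * a), fejerKernel n y ∂μ
        ≤ Real.pi^2/((2:ℝ)^K * a)^2 * (μ (Ioc ((2:ℝ)^K * a) ((2:ℝ)^(K+1) * a))).toReal := by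
      apply setInt_fejer_le μ n measurableSet_Ioc
      intro y hy
      have hy0 : 0 < y := lt_trans hKa0 hy.1
      have hyπ : y ≤ Real.pi := le_trans hy.2 hK
      calc fejerKernel n y ≤ Real.pi^2 / y^2 := fejer_le_inv_sq n hy0 hyπ
        _ ≤ Real.pi^2/((2:ℝ)^K * a)^2 :=
            div_le_div_of_nonneg_left (by positivity) (by positivity)
              (pow_le_pow_left₀ hKa0.le hy.1.le 2)
    apply hstep.trans
    apply mul_le_mul_of_nonneg_left _ (by positivity)
    apply ENNReal.toReal_mono (measure_ne_top μ _)
    apply measure_mono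
    intro y hy
    exact ⟨le_of_lt (lt_trans hKa0 hy.1), hy.2⟩

lemma pow_as_exp (k : ℕ) : (2:ℝ)^k = Real.exp (k * Real.log 2) := by
  rw [← Real.rpow_natCast 2 k, Real.rpow_def_of_pos two_pos, mul_comm]

lemma rpow_as_exp {x : ℝ} (hx : 0 < x) (p : ℝ) : x ^ p = Real.exp (p * Real.log x) := by
  rw [Real.rpow_def_of_pos hx, mul_comm]

lemma pid (γ A nn : ℝ) (hA : 0 < A) (hn : 0 < nn) (k : ℕ) :
    1/((2^k * (A/nn))^2) * ((2^(k+1) * (A/nn)) ^ (2-γ) *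
      ((nn * (2^(k+1) * (A/nn))) ^ (γ/2)))
    = ((2:ℝ)^(2-γ/2) * A^(γ/2) / A^γ) * ((2:ℝ)^(-(γ/2)))^k * nn^γ := by
  have hc : 0 < A / nn := by positivity
  have hsub : nn * (2^(k+1) * (A/nn)) = 2^(k+1) * A := by field_simp
  rw [hsub]
  have h2k1 : (0:ℝ) < 2^(k+1) := by positivity
  rw [mul_pow]
  rw [Real.mul_rpow (le_of_lt h2k1) (le_of_lt hc)]
  rw [Real.mul_rpow (le_of_lt h2k1) (le_of_lt hA)]
  rw [pow_as_exp (k+1), pow_as_exp k,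
    rpow_as_exp hc (2-γ), rpow_as_exp hA (γ/2), rpow_as_exp hA γ,
    rpow_as_exp hn γ,
    rpow_as_exp (Real.exp_pos _) (2-γ),
    rpow_as_exp (Real.exp_pos _) (γ/2)]
  rw [show ((A:ℝ)/nn)^2 = Real.exp (2 * Real.log (A/nn)) by
    rw [← Real.rpow_natCast (A/nn) 2, rpow_as_exp hc]; norm_num]
  rw [rpow_as_exp two_pos (2-γ/2), rpow_as_exp two_pos (-(γ/2))]
  simp only [Real.log_div hA.ne' hn.ne']
  simp only [Real.log_exp, ← Real.exp_nat_mul, one_div, ← Real.exp_neg,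
    div_eq_mul_inv, ← Real.exp_add, one_mul]
  congr 1
  push_cast
  ring

/-- Uniform convergence theorem for additively slowly oscillating measurable functions. -/
lemma uct_aux (h : ℝ → ℝ) (hm : Measurable h)
    (hconv : ∀ u : ℝ, Tendsto (fun t => h (t + u) - h t) atTop (𝓝 0)) :
    ∀ ε > (0:ℝ), ∃ X : ℝ, ∀ t ≥ X, ∀ u ∈ Icc (0:ℝ) 1, |h (t + u) - h t| ≤ ε := by
  intro ε hε
  by_contra hcon
  push_neg at hcon
  -- build sequences
  have hsel : ∀ m : ℕ, ∃ t : ℝ, (m:ℝ) ≤ t ∧ ∃ u, u ∈ Icc (0:ℝ) 1 ∧ ε < |h (t + u) - h t| := by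
    intro m
    obtain ⟨t, ht, u, hu, hb⟩ := hcon m
    exact ⟨t, ht, u, hu, hb⟩
  choose T hT U hU hB using hsel
  have hTtop : Tendsto T atTop atTop :=
    tendsto_atTop_mono hT tendsto_natCast_atTop_atTop
  have hT'top : Tendsto (fun m => T m + U m) atTop atTop := by
    apply tendsto_atTop_mono (fun m => ?_) hTtop
    have := (hU m).1; linarith
  -- the two families of good sets
  set E : ℕ → Set ℝ := fun n =>
    Icc 0 2 ∩ ⋂ m, ⋂ (_ : n ≤ m), {v | |h (T m + v) - h (T m)| ≤ ε/3} with hE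
  set F : ℕ → Set ℝ := fun n =>
    Icc 0 2 ∩ ⋂ m, ⋂ (_ : n ≤ m), {v | |h (T m + U m + v) - h (T m + U m)| ≤ ε/3} with hF
  have measE : ∀ n, MeasurableSet (E n) := by
    intro n
    apply measurableSet_Icc.inter
    apply MeasurableSet.iInter; intro m; apply MeasurableSet.iInter; intro _
    exact ((hm.comp (measurable_const_add (T m))).sub measurable_const).abs measurableSet_Iic
  have measF : ∀ n, MeasurableSet (F n) := by
    intro n
    apply measurableSet_Icc.inter
    apply MeasurableSet.iInter; intro m; apply MeasurableSet.iInter; intro _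
    exact ((hm.comp (measurable_const_add (T m + U m))).sub measurable_const).abs
      measurableSet_Iic
  -- monotonicity and covering
  have genU : ∀ (S : ℕ → ℝ), Tendsto S atTop atTop →
      (⋃ n, (Icc (0:ℝ) 2 ∩ ⋂ m, ⋂ (_ : n ≤ m), {v | |h (S m + v) - h (S m)| ≤ ε/3}))
        = Icc (0:ℝ) 2 := by
    intro S hS
    apply Subset.antisymm
    · exact iUnion_subset fun n => inter_subset_left
    · intro v hv
      have hconv' : Tendsto (fun m => h (S m + v) - h (S m)) atTop (𝓝 0) :=
        (hconv v).comp hS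
      have habs : Tendsto (fun m => |h (S m + v) - h (S m)|) atTop (𝓝 0) := by
        simpa using hconv'.abs
      have hev : ∀ᶠ m in atTop, |h (S m + v) - h (S m)| ≤ ε/3 :=
        habs.eventually_le_const (by linarith)
      obtain ⟨n, hn⟩ := eventually_atTop.mp hev
      exact mem_iUnion.mpr ⟨n, hv, by
        simp only [mem_iInter]; intro m hmn; exact hn m hmn⟩
  have monoE : Monotone E := by
    intro a b hab
    apply inter_subset_inter_right
    intro v hv
    simp only [mem_iInter] at hv ⊢
    intro m hm; exact hv m (le_trans hab hm)
  have monoF : Monotone F := by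
    intro a b hab
    apply inter_subset_inter_right
    intro v hv
    simp only [mem_iInter] at hv ⊢
    intro m hm; exact hv m (le_trans hab hm)
  have volE : Tendsto (fun n => volume (E n)) atTop (𝓝 (volume (Icc (0:ℝ) 2))) := by
    have := tendsto_measure_iUnion_atTop (μ := volume) monoE
    rwa [hE, genU T hTtop] at this
  have volF : Tendsto (fun n => volume (F n)) atTop (𝓝 (volume (Icc (0:ℝ) 2))) := by
    have := tendsto_measure_iUnion_atTop (μ := volume) monoF
    rwa [hF, genU _ hT'top] at this
  have hvol2 : volume (Icc (0:ℝ) 2) = 2 := by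
    rw [Real.volume_Icc]; norm_num
  have h32 : (3/2 : ℝ≥0∞) < volume (Icc (0:ℝ) 2) := by
    rw [hvol2, ENNReal.div_lt_iff (by norm_num) (by norm_num)]; norm_num
  obtain ⟨n₁, hn₁⟩ := (volE.eventually_const_lt h32).exists
  obtain ⟨n₂, hn₂⟩ := (volF.eventually_const_lt h32).exists
  set m := max n₁ n₂ with hmdef
  set B : Set ℝ := (fun w => w - U m) ⁻¹' F n₂ with hBdef
  have measB : MeasurableSet B := (measurable_id.sub measurable_const) (measF n₂)
  have volB : volume B = volume (F n₂) := by
    rw [hBdef, show (fun w : ℝ => w - U m) = (fun w : ℝ => w + (-U m)) by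
      funext w; ring]
    exact measure_preimage_add_right volume (-U m) (F n₂)
  have hmB : (3/2:ℝ≥0∞) < volume B := volB ▸ hn₂
  have hmE : (3/2:ℝ≥0∞) < volume (E (n₁)) := hn₁
  -- E n₁ and B live inside Icc 0 3
  have hEsub : E n₁ ⊆ Icc (0:ℝ) 3 := by
    refine inter_subset_left.trans ?_
    exact Icc_subset_Icc le_rfl (by norm_num)
  have hBsub : B ⊆ Icc (0:ℝ) 3 := by
    intro w hw
    have h1 : w - U m ∈ Icc (0:ℝ) 2 := (mem_preimage.mp hw).1
    have h2 := hU m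
    simp only [mem_Icc] at h1 h2 ⊢
    constructor <;> linarith [h1.1, h1.2, h2.1, h2.2]
  have hne : volume (E n₁ ∩ B) ≠ 0 := by
    intro h0
    have hkey := measure_union_add_inter (μ := volume) (E n₁) measB
    rw [h0, add_zero] at hkey
    have hle : volume (E n₁ ∪ B) ≤ volume (Icc (0:ℝ) 3) :=
      measure_mono (union_subset hEsub hBsub)
    have hv3 : volume (Icc (0:ℝ) 3) = 3 := by rw [Real.volume_Icc]; norm_num
    have hgt : (3:ℝ≥0∞) < volume (E n₁) + volume B := by
      have := ENNReal.add_lt_add hmE hmB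
      calc (3:ℝ≥0∞) = 3/2 + 3/2 := by
            rw [ENNReal.div_add_div_same, show (3+3:ℝ≥0∞) = 2*3 by norm_num, mul_comm,
              mul_div_assoc, ENNReal.div_self (by norm_num) (by norm_num), mul_one]
        _ < volume (E n₁) + volume B := this
    rw [← hkey] at hgt
    rw [hv3] at hle
    exact absurd (lt_of_lt_of_le hgt hle) (lt_irrefl _)
  obtain ⟨v, hv⟩ := nonempty_of_measure_ne_zero hne
  obtain ⟨hvE, hvB⟩ := hv
  have hvE' : |h (T m + v) - h (T m)| ≤ ε/3 := by
    have := hvE.2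
    simp only [mem_iInter, mem_setOf_eq] at this
    exact this m (le_max_left _ _)
  have hvB' : |h (T m + v) - h (T m + U m)| ≤ ε/3 := by
    have h1 : v - U m ∈ F n₂ := mem_preimage.mp hvB
    have h2 := h1.2
    simp only [mem_iInter, mem_setOf_eq] at h2
    have h3 := h2 m (le_max_right _ _)
    rwa [show T m + U m + (v - U m) = T m + v by ring] at h3
  have htri : |h (T m + U m) - h (T m)| ≤
      |h (T m + U m) - h (T m + v)| + |h (T m + v) - h (T m)| := abs_sub_le _ _ _
  have h4 : |h (T m + U m) - h (T m + v)| = |h (T m + v) - h (T m + U m)| :=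
    abs_sub_comm _ _
  have := hB m
  linarith

/-- Potter bounds for slowly varying functions. -/
lemma potter (L : ℝ → ℝ) (hLmeas : Measurable L) (hLpos : ∀ x > (0:ℝ), 0 < L x)
    (hL : SlowlyVarying L) {δ : ℝ} (hδ : 0 < δ) :
    ∃ M : ℝ, 1 ≤ M ∧ ∃ Cp : ℝ, 1 ≤ Cp ∧ ∀ x y : ℝ, M ≤ x → x ≤ y →
      L y ≤ Cp * (y/x) ^ δ * L x ∧ L x ≤ Cp * (y/x) ^ δ * L y := by
  set h : ℝ → ℝ := fun t => Real.log (L (Real.exp t)) with hh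
  have hm : Measurable h := Real.measurable_log.comp (hLmeas.comp Real.measurable_exp)
  have hconv : ∀ u : ℝ, Tendsto (fun t => h (t + u) - h t) atTop (𝓝 0) := by
    intro u
    have h1 : Tendsto (fun x => L (Real.exp u * x) / L x) atTop (𝓝 1) :=
      hL (Real.exp u) (Real.exp_pos u)
    have h2 : Tendsto (fun t : ℝ => L (Real.exp u * Real.exp t) / L (Real.exp t))
        atTop (𝓝 1) := h1.comp Real.tendsto_exp_atTop
    have h3 : Tendsto (fun t : ℝ => Real.log (L (Real.exp u * Real.exp t) / L (Real.exp t)))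
        atTop (𝓝 0) := by
      have := ((Real.continuousAt_log one_ne_zero).tendsto).comp h2
      rwa [Real.log_one] at this
    apply h3.congr
    intro t
    rw [Real.log_div (hLpos _ (by positivity)).ne' (hLpos _ (Real.exp_pos t)).ne']
    rw [hh]
    congr 2
    rw [Real.exp_add]
    ring
  obtain ⟨X, hX⟩ := uct_aux h hm hconv δ hδ
  -- chaining
  have chain : ∀ q : ℕ, ∀ s : ℝ, X ≤ s → ∀ r : ℝ, 0 ≤ r → r ≤ 1 →
      |h (s + ((q:ℝ) + r)) - h s| ≤ ((q:ℝ) + 1) * δ := by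
    intro q
    induction q with
    | zero =>
      intro s hs r hr hr1
      simpa using hX s hs r ⟨hr, hr1⟩
    | succ k ih =>
      intro s hs r hr hr1
      have h1 : |h ((s+1) + ((k:ℝ) + r)) - h (s+1)| ≤ ((k:ℝ) + 1) * δ :=
        ih (s+1) (by linarith) r hr hr1
      have h2 : |h (s + 1) - h s| ≤ δ := by
        simpa using hX s hs 1 ⟨zero_le_one, le_rfl⟩
      have he : (s+1) + ((k:ℝ) + r) = s + (((k:ℕ)+1:ℕ) + r) := by push_cast; ring
      rw [he] at h1
      have htri := abs_sub_le (h (s + (((k:ℕ)+1:ℕ) + r))) (h (s+1)) (h s)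
      push_cast at htri h1 h2 ⊢
      linarith
  set M : ℝ := max 1 (Real.exp X) with hM
  refine ⟨M, le_max_left _ _, Real.exp δ, Real.one_le_exp hδ.le, ?_⟩
  intro x y hx hxy
  have hx0 : (0:ℝ) < x := lt_of_lt_of_le one_pos (le_trans (le_max_left _ _) hx)
  have hy0 : (0:ℝ) < y := lt_of_lt_of_le hx0 hxy
  have hsX : X ≤ Real.log x := by
    rw [← Real.log_exp X]
    exact Real.log_le_log (Real.exp_pos X) (le_trans (le_max_right _ _) hx)
  have hst : Real.log x ≤ Real.log y := Real.log_le_log hx0 hxy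
  -- the two-sided bound on h
  have key : |h (Real.log y) - h (Real.log x)| ≤ δ + δ * (Real.log y - Real.log x) := by
    set d : ℝ := Real.log y - Real.log x with hd
    have hd0 : 0 ≤ d := by simp [hd]; linarith
    set q : ℕ := ⌊d⌋₊ with hq
    have hq1 : (q:ℝ) ≤ d := Nat.floor_le hd0
    have hq2 : d < (q:ℝ) + 1 := Nat.lt_floor_add_one d
    have hr : 0 ≤ d - q := by linarith
    have hr1 : d - q ≤ 1 := by linarith
    have := chain q (Real.log x) hsX (d - q) hr hr1
    rw [show Real.log x + ((q:ℝ) + (d - q)) = Real.log y by rw [hd]; ring] at this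
    calc |h (Real.log y) - h (Real.log x)| ≤ ((q:ℝ) + 1) * δ := this
      _ ≤ (d + 1) * δ := by nlinarith
      _ = δ + δ * d := by ring
  have hhx : h (Real.log x) = Real.log (L x) := by rw [hh]; simp [Real.exp_log hx0]
  have hhy : h (Real.log y) = Real.log (L y) := by rw [hh]; simp [Real.exp_log hy0]
  rw [hhx, hhy] at key
  have hLx := hLpos x hx0
  have hLy := hLpos y hy0
  have habs := abs_le.mp key
  have hrpow : (y/x) ^ δ = Real.exp (δ * (Real.log y - Real.log x)) := by
    rw [Real.rpow_def_of_pos (by positivity), Real.log_div hy0.ne' hx0.ne']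
    ring_nf
  constructor
  · have h1 : Real.log (L y) ≤ Real.log (L x) + (δ + δ * (Real.log y - Real.log x)) := by
      linarith [habs.2]
    calc L y = Real.exp (Real.log (L y)) := (Real.exp_log hLy).symm
      _ ≤ Real.exp (Real.log (L x) + (δ + δ * (Real.log y - Real.log x))) :=
        Real.exp_le_exp.mpr h1
      _ = Real.exp δ * (y/x) ^ δ * L x := by
        rw [hrpow]
        rw [show Real.log (L x) + (δ + δ * (Real.log y - Real.log x))
            = δ + (δ * (Real.log y - Real.log x) + Real.log (L x)) by ring,
          Real.exp_add, Real.exp_add, Real.exp_log hLx]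
        ring
  · have h1 : Real.log (L x) ≤ Real.log (L y) + (δ + δ * (Real.log y - Real.log x)) := by
      linarith [habs.1]
    calc L x = Real.exp (Real.log (L x)) := (Real.exp_log hLx).symm
      _ ≤ Real.exp (Real.log (L y) + (δ + δ * (Real.log y - Real.log x))) :=
        Real.exp_le_exp.mpr h1
      _ = Real.exp δ * (y/x) ^ δ * L y := by
        rw [hrpow]
        rw [show Real.log (L y) + (δ + δ * (Real.log y - Real.log x))
            = δ + (δ * (Real.log y - Real.log x) + Real.log (L y)) by ring,
          Real.exp_add, Real.exp_add, Real.exp_log hLy]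
        ring

end Aux

lemma core_estimate (μ : Measure ℝ) [IsFiniteMeasure μ]
    (γ : ℝ) (hγ0 : 0 < γ) (hγ2 : γ < 2)
    (L : ℝ → ℝ) (hLpos : ∀ x > (0 : ℝ), 0 < L x)
    (C₁ C₂ : ℝ) (hC₁ : 0 < C₁) (hC₂ : 0 < C₂)
    (hG : ∀ x : ℝ, 0 < x → x ≤ Real.pi → specG μ x ≤ C₁ * x ^ (2 - γ) * L (1 / x))
    (M Cp : ℝ) (hM1 : 1 ≤ M) (hCp1 : 1 ≤ Cp)
    (hPot : ∀ x y : ℝ, M ≤ x → x ≤ y →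
      L y ≤ Cp * (y/x) ^ (γ/2) * L x ∧ L x ≤ Cp * (y/x) ^ (γ/2) * L y)
    (b : ℝ) (hb0 : 0 < b) (hbM : b ≤ 1/(2*M)) (hb2π : 2*b ≤ Real.pi)
    (A : ℝ) (hA1 : 1 ≤ A)
    (Q r S : ℝ)
    (hQdef : Q = Real.pi^2 * C₁ * Cp * (2:ℝ)^(2-γ/2))
    (hrdef : r = (2:ℝ)^(-(γ/2)))
    (hSdef : S = 1/(1-r))
    (hAQ : Q * (A^(γ/2)/A^γ) * S ≤ C₂/4)
    (n : ℕ) (hn1 : 1 ≤ n) (hnM : M ≤ (n:ℝ)) (hnAb : A/b ≤ (n:ℝ))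
    (htail : Real.pi^2/b^2 * (μ (Icc 0 Real.pi)).toReal ≤ C₂/4 * ((n:ℝ)^γ * L n))
    (hVn : C₂ * (n:ℝ)^γ * L n ≤ varV μ n) :
    C₂/2 * ((n:ℝ)^γ * L n) ≤ (n:ℝ)^2 * specG μ (A/(n:ℝ)) := by
  have hπ := Real.pi_pos
  have hM0 : (0:ℝ) < M := lt_of_lt_of_le one_pos hM1
  have hCp0 : (0:ℝ) < Cp := lt_of_lt_of_le one_pos hCp1
  have hA0 : (0:ℝ) < A := lt_of_lt_of_le one_pos hA1
  have hn0 : (0:ℝ) < n := lt_of_lt_of_le hM0 hnM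
  have hLn0 : 0 < L n := hLpos _ hn0
  have hr0 : 0 ≤ r := by rw [hrdef]; exact le_of_lt (Real.rpow_pos_of_pos two_pos _)
  have hr1 : r < 1 := by
    rw [hrdef]
    exact Real.rpow_lt_one_of_one_lt_of_neg one_lt_two (by linarith)
  have hQ0 : 0 < Q := by
    rw [hQdef]
    have : (0:ℝ) < (2:ℝ)^(2-γ/2) := Real.rpow_pos_of_pos two_pos _
    positivity
  obtain ⟨a, hadef⟩ : ∃ a : ℝ, a = A/(n:ℝ) := ⟨_, rfl⟩
  have ha0 : 0 < a := by rw [hadef]; exact div_pos hA0 hn0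
  have hab : a ≤ b := by
    rw [hadef, div_le_iff₀ hn0]
    have h := (div_le_iff₀ hb0).mp hnAb
    linarith
  have haπ : a ≤ Real.pi := le_trans hab (by linarith)
  obtain ⟨K, hK1, hK2⟩ := exists_dyadic ha0 hab
  have hKπ : (2:ℝ)^K * a ≤ Real.pi := le_trans hK2 hb2π
  have haK : a ≤ (2:ℝ)^K * a := le_trans hab hK1
  have hdisj : Disjoint (Icc (0:ℝ) a) (Ioc a Real.pi) := by
    apply disjoint_left.mpr
    rintro y ⟨_, hya⟩ ⟨hay, _⟩
    exact absurd hya (not_le.mpr hay)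
  have hIsplit : varV μ n = (∫ y in Icc 0 a, fejerKernel n y ∂μ)
      + ((∫ y in Ioc a ((2:ℝ)^K*a), fejerKernel n y ∂μ)
        + (∫ y in Ioc ((2:ℝ)^K*a) Real.pi, fejerKernel n y ∂μ)) := by
    rw [varV, ← Set.Icc_union_Ioc_eq_Icc (le_of_lt ha0) haπ,
      setIntegral_union hdisj measurableSet_Ioc ((fejer_integrable μ n).integrableOn)
        ((fejer_integrable μ n).integrableOn)]
    congr 1
    rw [← Set.Ioc_union_Ioc_eq_Ioc haK hKπ,
      setIntegral_union (Ioc_disjoint_Ioc_of_le le_rfl) measurableSet_Ioc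
        ((fejer_integrable μ n).integrableOn) ((fejer_integrable μ n).integrableOn)]
  have hT1 : (∫ y in Icc 0 a, fejerKernel n y ∂μ) ≤ (n:ℝ)^2 * specG μ a :=
    setInt_fejer_le μ n measurableSet_Icc (fun y _ => fejer_le_sq n y)
  have hT3 : (∫ y in Ioc ((2:ℝ)^K*a) Real.pi, fejerKernel n y ∂μ)
      ≤ Real.pi^2/b^2 * (μ (Icc 0 Real.pi)).toReal := by
    have hKa0 : 0 < (2:ℝ)^K * a := mul_pos (pow_pos two_pos _) ha0
    have hb1 : (∫ y in Ioc ((2:ℝ)^K*a) Real.pi, fejerKernel n y ∂μ)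
        ≤ Real.pi^2/b^2 * (μ (Ioc ((2:ℝ)^K*a) Real.pi)).toReal := by
      apply setInt_fejer_le μ n measurableSet_Ioc
      intro y hy
      have hy0 : 0 < y := lt_trans hKa0 hy.1
      calc fejerKernel n y ≤ Real.pi^2 / y^2 := fejer_le_inv_sq n hy0 hy.2
        _ ≤ Real.pi^2/b^2 := by
            apply div_le_div_of_nonneg_left (by positivity) (pow_pos hb0 2)
            apply pow_le_pow_left₀ hb0.le
            exact le_trans hK1 hy.1.le
    apply hb1.trans
    apply mul_le_mul_of_nonneg_left _ (by positivity)
    apply ENNReal.toReal_mono (measure_ne_top μ _)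
    apply measure_mono
    intro y hy
    exact ⟨le_of_lt (lt_trans hKa0 hy.1), hy.2⟩
  have hT2 : (∫ y in Ioc a ((2:ℝ)^K*a), fejerKernel n y ∂μ)
      ≤ C₂/4 * ((n:ℝ)^γ * L n) := by
    apply (dyadic_bound μ n ha0 K hKπ).trans
    have hnl : (0:ℝ) ≤ (n:ℝ)^γ * L n :=
      mul_nonneg (Real.rpow_nonneg hn0.le _) hLn0.le
    have hterm : ∀ k ∈ Finset.range K,
        Real.pi^2/((2:ℝ)^k * a)^2 * specG μ ((2:ℝ)^(k+1)*a)
        ≤ (Q * (A^(γ/2)/A^γ) * ((n:ℝ)^γ * L n)) * r^k := by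
      intro k hk
      have hkK : k + 1 ≤ K := Finset.mem_range.mp hk
      have hpowk : (2:ℝ)^(k+1) ≤ (2:ℝ)^K := pow_le_pow_right₀ one_le_two hkK
      have hy0 : (0:ℝ) < (2:ℝ)^(k+1)*a := mul_pos (pow_pos two_pos _) ha0
      have hyK : (2:ℝ)^(k+1)*a ≤ (2:ℝ)^K*a := mul_le_mul_of_nonneg_right hpowk ha0.le
      have hyπ : (2:ℝ)^(k+1)*a ≤ Real.pi := le_trans hyK hKπ
      have hy2b : (2:ℝ)^(k+1)*a ≤ 2*b := le_trans hyK hK2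
      have hg := hG _ hy0 hyπ
      have hxM : M ≤ 1/((2:ℝ)^(k+1)*a) := by
        rw [le_div_iff₀ hy0]
        have h1M : M * (2*b) ≤ 1 := by
          have hh := hbM
          rw [le_div_iff₀ (by positivity : (0:ℝ) < 2*M)] at hh
          calc M * (2*b) = b * (2*M) := by ring
            _ ≤ 1 := hh
        calc M * ((2:ℝ)^(k+1)*a) ≤ M * (2*b) :=
              mul_le_mul_of_nonneg_left hy2b hM0.le
          _ ≤ 1 := h1M
      have hxn : 1/((2:ℝ)^(k+1)*a) ≤ (n:ℝ) := by
        rw [div_le_iff₀ hy0]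
        have hna : (n:ℝ)*a = A := by
          rw [hadef]; field_simp
        have h2k1 : (1:ℝ) ≤ 2^(k+1) := one_le_pow₀ one_le_two
        rw [show (n:ℝ)*((2:ℝ)^(k+1)*a) = 2^(k+1)*((n:ℝ)*a) from by ring, hna]
        exact le_trans hA1 (le_mul_of_one_le_left hA0.le h2k1)
      have hpot := (hPot (1/((2:ℝ)^(k+1)*a)) n hxM hxn).2
      have hratio : (n:ℝ)/(1/((2:ℝ)^(k+1)*a)) = (n:ℝ) * ((2:ℝ)^(k+1)*a) := by
        field_simp
      rw [hratio] at hpot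
      have hcomb : specG μ ((2:ℝ)^(k+1)*a)
          ≤ C₁ * ((2:ℝ)^(k+1)*a)^(2-γ)
            * (Cp * ((n:ℝ)*((2:ℝ)^(k+1)*a))^(γ/2) * L n) := by
        apply hg.trans
        apply mul_le_mul_of_nonneg_left hpot
        have h1 : (0:ℝ) ≤ ((2:ℝ)^(k+1)*a)^(2-γ) := Real.rpow_nonneg hy0.le _
        positivity
      have hmul : Real.pi^2/((2:ℝ)^k*a)^2 * specG μ ((2:ℝ)^(k+1)*a)
          ≤ Real.pi^2/((2:ℝ)^k*a)^2 * (C₁ * ((2:ℝ)^(k+1)*a)^(2-γ)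
            * (Cp * ((n:ℝ)*((2:ℝ)^(k+1)*a))^(γ/2) * L n)) :=
        mul_le_mul_of_nonneg_left hcomb (by positivity)
      apply hmul.trans
      have hp := pid γ A n hA0 hn0 k
      have hEq : Real.pi^2/((2:ℝ)^k*a)^2 * (C₁ * ((2:ℝ)^(k+1)*a)^(2-γ)
            * (Cp * ((n:ℝ)*((2:ℝ)^(k+1)*a))^(γ/2) * L n))
          = (Q * (A^(γ/2)/A^γ) * ((n:ℝ)^γ * L n)) * r^k := by
        calc Real.pi^2/((2:ℝ)^k*a)^2 * (C₁ * ((2:ℝ)^(k+1)*a)^(2-γ)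
            * (Cp * ((n:ℝ)*((2:ℝ)^(k+1)*a))^(γ/2) * L n))
            = Real.pi^2 * C₁ * Cp * L n * (1/((2^k * (A/(n:ℝ)))^2)
              * ((2^(k+1) * (A/(n:ℝ))) ^ (2-γ)
                * (((n:ℝ) * (2^(k+1) * (A/(n:ℝ)))) ^ (γ/2)))) := by
              rw [hadef]; ring
          _ = Real.pi^2 * C₁ * Cp * L n * (((2:ℝ)^(2-γ/2) * A^(γ/2) / A^γ)
              * ((2:ℝ)^(-(γ/2)))^k * (n:ℝ)^γ) := by rw [hp]
          _ = (Q * (A^(γ/2)/A^γ) * ((n:ℝ)^γ * L n)) * r^k := by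
              rw [hQdef, hrdef]; ring
      rw [hEq]
    calc ∑ k ∈ Finset.range K, Real.pi^2/((2:ℝ)^k*a)^2 * specG μ ((2:ℝ)^(k+1)*a)
        ≤ ∑ k ∈ Finset.range K, (Q * (A^(γ/2)/A^γ) * ((n:ℝ)^γ * L n)) * r^k :=
          Finset.sum_le_sum hterm
      _ = (Q * (A^(γ/2)/A^γ) * ((n:ℝ)^γ * L n)) * ∑ k ∈ Finset.range K, r^k := by
          rw [Finset.mul_sum]
      _ ≤ (Q * (A^(γ/2)/A^γ) * ((n:ℝ)^γ * L n)) * S := by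
          rw [hSdef]
          apply mul_le_mul_of_nonneg_left (geom_le_aux hr0 hr1 K)
          have h1 : (0:ℝ) ≤ A^(γ/2)/A^γ := by positivity
          exact mul_nonneg (mul_nonneg hQ0.le h1) hnl
      _ = (Q * (A^(γ/2)/A^γ) * S) * ((n:ℝ)^γ * L n) := by ring
      _ ≤ C₂/4 * ((n:ℝ)^γ * L n) := mul_le_mul_of_nonneg_right hAQ hnl
  have hT3' := hT3.trans htail
  have hfin : C₂ * (n:ℝ)^γ * L n ≤ (n:ℝ)^2 * specG μ a
      + (C₂/4*((n:ℝ)^γ*L n) + C₂/4*((n:ℝ)^γ*L n)) := by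
    calc C₂ * (n:ℝ)^γ * L n ≤ varV μ n := hVn
      _ = _ := hIsplit
      _ ≤ _ := add_le_add hT1 (add_le_add hT2 hT3')
  rw [← hadef]
  linarith [hfin]

/-- If `G(x) ≤ C₁ x^{2-γ} L(1/x)` on `(0,π]` and `V(n) ≥ C₂ n^γ L(n)` for all `n ≥ 1`,
then `G(x) ≥ C₃ x^{2-γ} L(1/x)` near the origin. -/
theorem spectral_lower_of_variance_lower (μ : Measure ℝ) [IsFiniteMeasure μ]
    (hsupp : μ (Icc 0 Real.pi)ᶜ = 0)
    (γ : ℝ) (hγ : γ ∈ Ioo (0 : ℝ) 2)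
    (L : ℝ → ℝ) (hLmeas : Measurable L) (hLpos : ∀ x > (0 : ℝ), 0 < L x)
    (hL : SlowlyVarying L)
    (C₁ C₂ : ℝ) (hC₁ : 0 < C₁) (hC₂ : 0 < C₂)
    (hG : ∀ x : ℝ, 0 < x → x ≤ Real.pi → specG μ x ≤ C₁ * x ^ (2 - γ) * L (1 / x))
    (hV : ∀ n : ℕ, 1 ≤ n → C₂ * (n : ℝ) ^ γ * L n ≤ varV μ n) :
    ∃ C₃ > (0 : ℝ), ∃ x₀ > (0 : ℝ), ∀ x : ℝ, 0 < x → x ≤ x₀ →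
      C₃ * x ^ (2 - γ) * L (1 / x) ≤ specG μ x := by
  obtain ⟨hγ0, hγ2⟩ := hγ
  have hπ := Real.pi_pos
  have hδ0 : (0:ℝ) < γ/2 := by linarith
  obtain ⟨M, hM1, Cp, hCp1, hPot⟩ := potter L hLmeas hLpos hL hδ0
  have hM0 : (0:ℝ) < M := lt_of_lt_of_le one_pos hM1
  have hCp0 : (0:ℝ) < Cp := lt_of_lt_of_le one_pos hCp1
  obtain ⟨b, hbdef⟩ : ∃ b : ℝ, b = min (Real.pi/2) (1/(2*M)) := ⟨_, rfl⟩
  have hb0 : 0 < b := by rw [hbdef]; exact lt_min (by positivity) (by positivity)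
  have hbπ2 : b ≤ Real.pi/2 := by rw [hbdef]; exact min_le_left _ _
  have hbM : b ≤ 1/(2*M) := by rw [hbdef]; exact min_le_right _ _
  have hb2π : 2*b ≤ Real.pi := by linarith
  -- growth of n^γ L n
  have hLM0 : 0 < L M := hLpos M hM0
  have hgrow : Tendsto (fun n : ℕ => (n:ℝ)^γ * L n) atTop atTop := by
    have hbase : Tendsto (fun n : ℕ => L M / Cp * M^(γ/2) * (n:ℝ)^(γ/2)) atTop atTop := by
      apply Tendsto.const_mul_atTop
      · have h1 : (0:ℝ) < M^(γ/2) := Real.rpow_pos_of_pos hM0 _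
        positivity
      · exact (tendsto_rpow_atTop hδ0).comp tendsto_natCast_atTop_atTop
    apply tendsto_atTop_mono' atTop ?_ hbase
    filter_upwards [eventually_ge_atTop (Nat.ceil M)] with n hn
    have hnM : M ≤ (n:ℝ) := le_trans (Nat.le_ceil M) (Nat.cast_le.mpr hn)
    have hn0 : (0:ℝ) < n := lt_of_lt_of_le hM0 hnM
    have hp := (hPot M n le_rfl hnM).2
    have hLn0 : 0 < L n := hLpos _ hn0
    have hrpos : (0:ℝ) < ((n:ℝ)/M)^(γ/2) := Real.rpow_pos_of_pos (by positivity) _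
    have h1 : L M / (Cp * ((n:ℝ)/M)^(γ/2)) ≤ L n := by
      rw [div_le_iff₀ (by positivity)]
      linarith [hp]
    have hkey : L M / Cp * M^(γ/2) * (n:ℝ)^(γ/2)
        = (n:ℝ)^γ * (L M / (Cp * ((n:ℝ)/M)^(γ/2))) := by
      have hnn : (n:ℝ)^(γ/2) * (n:ℝ)^(γ/2) = (n:ℝ)^γ := by
        rw [← Real.rpow_add hn0]; ring_nf
      have hMp : (0:ℝ) < M^(γ/2) := Real.rpow_pos_of_pos hM0 _
      have hNp : (0:ℝ) < (n:ℝ)^(γ/2) := Real.rpow_pos_of_pos hn0 _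
      rw [← hnn, Real.div_rpow hn0.le hM0.le]
      field_simp
    calc L M / Cp * M^(γ/2) * (n:ℝ)^(γ/2)
        = (n:ℝ)^γ * (L M / (Cp * ((n:ℝ)/M)^(γ/2))) := hkey
      _ ≤ (n:ℝ)^γ * L n := by
          apply mul_le_mul_of_nonneg_left h1
          exact Real.rpow_nonneg hn0.le _
  -- constants
  obtain ⟨Q, hQdef⟩ : ∃ Q : ℝ, Q = Real.pi^2 * C₁ * Cp * (2:ℝ)^(2-γ/2) := ⟨_, rfl⟩
  have hQ0 : 0 < Q := by
    rw [hQdef]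
    have h1 : (0:ℝ) < (2:ℝ)^(2-γ/2) := Real.rpow_pos_of_pos two_pos _
    positivity
  obtain ⟨r, hrdef⟩ : ∃ r : ℝ, r = (2:ℝ)^(-(γ/2)) := ⟨_, rfl⟩
  have hr1 : r < 1 := by
    rw [hrdef]
    exact Real.rpow_lt_one_of_one_lt_of_neg one_lt_two (by linarith)
  obtain ⟨S, hSdef⟩ : ∃ S : ℝ, S = 1/(1-r) := ⟨_, rfl⟩
  have hS0 : 0 < S := by rw [hSdef]; apply div_pos one_pos; linarith
  obtain ⟨A, hAge, hA1⟩ : ∃ A : ℝ, (4*Q*S/C₂) ≤ A^(γ/2) ∧ 1 ≤ A := by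
    have h := (tendsto_rpow_atTop hδ0).eventually_ge_atTop (4*Q*S/C₂)
    obtain ⟨A, hA⟩ := (h.and (eventually_ge_atTop 1)).exists
    exact ⟨A, hA.1, hA.2⟩
  have hA0 : 0 < A := lt_of_lt_of_le one_pos hA1
  have hAp2 : 0 < A^(γ/2) := Real.rpow_pos_of_pos hA0 _
  have hAγ : 0 < A^γ := Real.rpow_pos_of_pos hA0 _
  have hApow : A^(γ/2)/A^γ = 1/A^(γ/2) := by
    rw [← Real.rpow_sub hA0, show γ/2 - γ = -(γ/2) by ring, Real.rpow_neg hA0.le, one_div]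
  have hAQ : Q * (A^(γ/2)/A^γ) * S ≤ C₂/4 := by
    have h4 : 4*Q*S ≤ C₂ * A^(γ/2) := by
      rw [div_le_iff₀ hC₂] at hAge; linarith
    have hEq : Q * (A^(γ/2)/A^γ) * S = Q*S * (1/A^(γ/2)) := by rw [hApow]; ring
    rw [hEq, ← div_eq_mul_one_div, div_le_iff₀ hAp2]
    linarith
  -- threshold for the far tail
  have hev1 : ∀ᶠ n : ℕ in atTop,
      Real.pi^2/b^2 * (μ (Icc 0 Real.pi)).toReal ≤ C₂/4 * ((n:ℝ)^γ * L n) :=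
    (Tendsto.const_mul_atTop (show (0:ℝ) < C₂/4 by linarith) hgrow).eventually_ge_atTop _
  obtain ⟨N₁, hN₁⟩ := eventually_atTop.mp hev1
  obtain ⟨N, hNdef⟩ : ∃ N : ℕ, N = max (max 1 N₁) (Nat.ceil (max M (A/b))) := ⟨_, rfl⟩
  have hNpos : 1 ≤ N := by
    rw [hNdef]; exact le_trans (le_max_left 1 N₁) (le_max_left _ _)
  have hN0 : (0:ℝ) < (N:ℝ) := Nat.cast_pos.mpr hNpos
  obtain ⟨x₀, hx₀def⟩ : ∃ x₀ : ℝ, x₀ = min (A/(N:ℝ)) (1/M) := ⟨_, rfl⟩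
  have hx₀0 : 0 < x₀ := by
    rw [hx₀def]; exact lt_min (div_pos hA0 hN0) (one_div_pos.mpr hM0)
  obtain ⟨D, hDdef⟩ : ∃ D : ℝ, D = (2*A)^(2-γ) := ⟨_, rfl⟩
  obtain ⟨P, hPdef⟩ : ∃ P : ℝ, P = Cp * (2*A)^(γ/2) := ⟨_, rfl⟩
  have hD0 : 0 < D := by rw [hDdef]; exact Real.rpow_pos_of_pos (by linarith) _
  have hP0 : 0 < P := by
    rw [hPdef]; exact mul_pos hCp0 (Real.rpow_pos_of_pos (by linarith) _)
  obtain ⟨C₃, hC₃def⟩ : ∃ C₃ : ℝ, C₃ = C₂/2 / (D * P) := ⟨_, rfl⟩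
  have hC₃0 : 0 < C₃ := by rw [hC₃def]; exact div_pos (by linarith) (mul_pos hD0 hP0)
  have hC₃cancel : C₃ * (D * P) = C₂/2 := by
    rw [hC₃def]; exact div_mul_cancel₀ _ (mul_pos hD0 hP0).ne'
  refine ⟨C₃, hC₃0, x₀, hx₀0, ?_⟩
  intro x hx0 hxx₀
  obtain ⟨n, hndef⟩ : ∃ n : ℕ, n = Nat.ceil (A/x) := ⟨_, rfl⟩
  have hAx1 : (1:ℝ) ≤ A/x := by
    have hxA : x ≤ A := by
      have h1 : x ≤ A/(N:ℝ) := le_trans hxx₀ (hx₀def ▸ min_le_left _ _)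
      have h2 : A/(N:ℝ) ≤ A := by
        apply div_le_self hA0.le
        exact_mod_cast hNpos
      linarith
    rw [le_div_iff₀ hx0]; linarith
  have hn_ge : A/x ≤ (n:ℝ) := by rw [hndef]; exact Nat.le_ceil _
  have hn0R : (0:ℝ) < n := lt_of_lt_of_le (by linarith) hn_ge
  have hn_le : (n:ℝ) ≤ 2*(A/x) := by
    have h := Nat.ceil_lt_add_one (show (0:ℝ) ≤ A/x by linarith)
    rw [← hndef] at h
    linarith
  have hnN : N ≤ n := by
    have hx₁ : x ≤ A/(N:ℝ) := le_trans hxx₀ (hx₀def ▸ min_le_left _ _)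
    have h2 : (N:ℝ) ≤ A/x := by
      rw [le_div_iff₀ hx0]
      have h3 := (le_div_iff₀ hN0).mp hx₁
      linarith
    exact_mod_cast le_trans h2 hn_ge
  -- apply the core estimate
  have hn1 : 1 ≤ n := le_trans hNpos hnN
  have hnM : M ≤ (n:ℝ) := by
    have h1 : (Nat.ceil (max M (A/b)) : ℕ) ≤ N := hNdef ▸ le_max_right _ _
    have h2 : max M (A/b) ≤ (N:ℝ) := le_trans (Nat.le_ceil _) (Nat.cast_le.mpr h1)
    have h3 : (N:ℝ) ≤ (n:ℝ) := Nat.cast_le.mpr hnN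
    exact le_trans (le_trans (le_max_left _ _) h2) h3
  have hnAb : A/b ≤ (n:ℝ) := by
    have h1 : (Nat.ceil (max M (A/b)) : ℕ) ≤ N := hNdef ▸ le_max_right _ _
    have h2 : max M (A/b) ≤ (N:ℝ) := le_trans (Nat.le_ceil _) (Nat.cast_le.mpr h1)
    have h3 : (N:ℝ) ≤ (n:ℝ) := Nat.cast_le.mpr hnN
    exact le_trans (le_trans (le_max_right _ _) h2) h3
  have hnN₁ : N₁ ≤ n := by
    have h1 : N₁ ≤ N := by
      rw [hNdef]; exact le_trans (le_max_right 1 N₁) (le_max_left _ _)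
    exact le_trans h1 hnN
  have hc := core_estimate μ γ hγ0 hγ2 L hLpos C₁ C₂ hC₁ hC₂ hG M Cp hM1 hCp1 hPot
    b hb0 hbM hb2π A hA1 Q r S hQdef hrdef hSdef hAQ n hn1 hnM hnAb
    (hN₁ n hnN₁) (hV n hn1)
  have hGmono : specG μ (A/(n:ℝ)) ≤ specG μ x := by
    apply ENNReal.toReal_mono (measure_ne_top μ _)
    apply measure_mono
    apply Icc_subset_Icc_right
    rw [div_le_iff₀ hn0R]
    have h := (div_le_iff₀ hx0).mp hn_ge
    linarith
  have hkey : C₂/2 * ((n:ℝ)^γ * L n) ≤ specG μ x * (n:ℝ)^2 := by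
    calc C₂/2 * ((n:ℝ)^γ * L n) ≤ (n:ℝ)^2 * specG μ (A/(n:ℝ)) := hc
      _ ≤ (n:ℝ)^2 * specG μ x := mul_le_mul_of_nonneg_left hGmono (sq_nonneg _)
      _ = specG μ x * (n:ℝ)^2 := by ring
  -- Potter bound for L(1/x)
  have hx1M : M ≤ 1/x := by
    have h1 : x ≤ 1/M := le_trans hxx₀ (hx₀def ▸ min_le_right _ _)
    rw [le_div_iff₀ hx0]
    have h2 := (le_div_iff₀ hM0).mp h1
    linarith
  have hx1n : 1/x ≤ (n:ℝ) := by
    have h1 : 1/x ≤ A/x := by gcongr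
    linarith
  have hpotx := (hPot (1/x) n hx1M hx1n).2
  have hratio2 : (n:ℝ)/(1/x) = (n:ℝ)*x := by field_simp
  rw [hratio2] at hpotx
  have hnx2A : (n:ℝ)*x ≤ 2*A := by
    calc (n:ℝ)*x ≤ 2*(A/x)*x := mul_le_mul_of_nonneg_right hn_le hx0.le
      _ = 2*A := by field_simp
  have hLn0 : 0 < L n := hLpos _ hn0R
  have hpow2 : ((n:ℝ)*x)^(γ/2) ≤ (2*A)^(γ/2) :=
    Real.rpow_le_rpow (mul_nonneg hn0R.le hx0.le) hnx2A (le_of_lt hδ0)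
  have hLx_le : L (1/x) ≤ P * L n := by
    calc L (1/x) ≤ Cp * ((n:ℝ)*x)^(γ/2) * L n := hpotx
      _ ≤ Cp * (2*A)^(γ/2) * L n := by
          apply mul_le_mul_of_nonneg_right
            (mul_le_mul_of_nonneg_left hpow2 hCp0.le) hLn0.le
      _ = P * L n := by rw [hPdef]
  have h2γn : (n:ℝ)^(2:ℕ) = (n:ℝ)^(2-γ) * (n:ℝ)^γ := by
    rw [← Real.rpow_natCast (n:ℝ) 2, ← Real.rpow_add hn0R]
    norm_num
  have hx2γ : x^(2-γ) * (n:ℝ)^2 = ((n:ℝ)*x)^(2-γ) * (n:ℝ)^γ := by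
    rw [Real.mul_rpow hn0R.le hx0.le, h2γn]; ring
  have hnx2γ : ((n:ℝ)*x)^(2-γ) ≤ D := by
    rw [hDdef]
    exact Real.rpow_le_rpow (mul_nonneg hn0R.le hx0.le) hnx2A (by linarith)
  have hxp0 : (0:ℝ) ≤ x^(2-γ) := Real.rpow_nonneg hx0.le _
  have hchain : C₃ * x^(2-γ) * L (1/x) * (n:ℝ)^2 ≤ C₂/2 * ((n:ℝ)^γ * L n) := by
    calc C₃ * x^(2-γ) * L (1/x) * (n:ℝ)^2
        ≤ C₃ * x^(2-γ) * (P * L n) * (n:ℝ)^2 := by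
          apply mul_le_mul_of_nonneg_right
            (mul_le_mul_of_nonneg_left hLx_le (mul_nonneg hC₃0.le hxp0)) (sq_nonneg _)
      _ = C₃ * P * L n * (x^(2-γ) * (n:ℝ)^2) := by ring
      _ = C₃ * P * L n * (((n:ℝ)*x)^(2-γ) * (n:ℝ)^γ) := by rw [hx2γ]
      _ ≤ C₃ * P * L n * (D * (n:ℝ)^γ) := by
          apply mul_le_mul_of_nonneg_left
            (mul_le_mul_of_nonneg_right hnx2γ (Real.rpow_nonneg hn0R.le _))
          exact mul_nonneg (mul_nonneg hC₃0.le hP0.le) hLn0.le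
      _ = (C₃ * (D * P)) * ((n:ℝ)^γ * L n) := by ring
      _ = C₂/2 * ((n:ℝ)^γ * L n) := by rw [hC₃cancel]
  have hfinal : C₃ * x^(2-γ) * L (1/x) * (n:ℝ)^2 ≤ specG μ x * (n:ℝ)^2 :=
    le_trans hchain hkey
  exact le_of_mul_le_mul_right hfinal (pow_pos hn0R 2)
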